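/- Let G : ℝ² → ℝ³ be the Gauss map of the catenoid, G(t,u) = (cos t / cosh u, sin t / cosh u, −tanh u). Then the image of G is exactly the unit sphere minus the two poles: {G(t,u) : (t,u) ∈ ℝ²} = {x ∈ ℝ³ : ‖x‖ = 1} \ {(0,0,1), (0,0,−1)}. In particular the Gauss map of the catenoid omits exactly two (antipodal) points of the sphere. -/

import Mathlib

noncomputable section

/-- The space `ℝ³` with the Euclidean norm. -/
abbrev E3 := EuclideanSpace ℝ (Fin 3)

/-- The Gauss map of the catenoid,
`G(t,u) = (cos t / cosh u, sin t / cosh u, −tanh u)`. -/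
def catG (p : ℝ × ℝ) : E3 :=
  WithLp.toLp 2 ![Real.cos p.1 / Real.cosh p.2, Real.sin p.1 / Real.cosh p.2, -Real.tanh p.2]

lemma aux_tanh_lt_one (u : ℝ) : Real.tanh u < 1 := by
  rw [Real.tanh_eq_sinh_div_cosh, div_lt_one (Real.cosh_pos u)]
  nlinarith [Real.cosh_sq u, Real.cosh_pos u]

lemma aux_neg_one_lt_tanh (u : ℝ) : -1 < Real.tanh u := by
  rw [Real.tanh_eq_sinh_div_cosh, lt_div_iff₀ (Real.cosh_pos u)]
  nlinarith [Real.cosh_sq u, Real.cosh_pos u]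

/-- The image of the Gauss map of the catenoid is exactly the unit sphere minus the two
poles `(0,0,1)` and `(0,0,−1)`: the Gauss map of the catenoid omits exactly two
(antipodal) points of the sphere. -/
theorem catenoid_gauss_map_range :
    Set.range catG =
      {x : E3 | ‖x‖ = 1} \ {(WithLp.toLp 2 ![0, 0, 1] : E3), (WithLp.toLp 2 ![0, 0, -1] : E3)} := by
  ext x
  simp only [Set.mem_range, Set.mem_diff, Set.mem_setOf_eq, Set.mem_insert_iff,
    Set.mem_singleton_iff, not_or]
  constructor
  · rintro ⟨⟨t, u⟩, rfl⟩
    have hc := Real.cosh_pos u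
    have hc' : Real.cosh u ≠ 0 := ne_of_gt hc
    refine ⟨?_, ?_, ?_⟩
    · rw [EuclideanSpace.norm_eq]
      have hsum : ∑ i, ‖catG (t, u) i‖ ^ 2 = 1 := by
        simp only [catG, Fin.sum_univ_three, Real.norm_eq_abs, sq_abs,
          Matrix.cons_val_zero, Matrix.cons_val_one, Matrix.head_cons,
          Matrix.cons_val_two, Matrix.tail_cons, Real.tanh_eq_sinh_div_cosh]
        field_simp
        nlinarith [Real.cos_sq_add_sin_sq t, Real.cosh_sq u]
      rw [hsum, Real.sqrt_one]
    · intro h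
      have h2 : -Real.tanh u = 1 := by simpa [catG] using congrArg (· 2) h
      linarith [aux_neg_one_lt_tanh u]
    · intro h
      have h2 : -Real.tanh u = -1 := by simpa [catG] using congrArg (· 2) h
      linarith [aux_tanh_lt_one u]
  · rintro ⟨hn, h1, h2⟩
    have hsum : x 0 ^ 2 + x 1 ^ 2 + x 2 ^ 2 = 1 := by
      rw [EuclideanSpace.norm_eq] at hn
      have := Real.sqrt_eq_one.mp hn
      simpa [Fin.sum_univ_three, Real.norm_eq_abs, sq_abs] using this
    have hab : x 0 ^ 2 + x 1 ^ 2 ≠ 0 := by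
      intro h0
      have ha0 : x 0 = 0 := by nlinarith [sq_nonneg (x 0), sq_nonneg (x 1)]
      have hb0 : x 1 = 0 := by nlinarith [sq_nonneg (x 0), sq_nonneg (x 1)]
      have hc2 : (x 2 - 1) * (x 2 + 1) = 0 := by nlinarith
      rcases mul_eq_zero.mp hc2 with h | h
      · apply h1
        ext i
        fin_cases i
        · simpa using ha0
        · simpa using hb0
        · have : x 2 = 1 := by linarith
          simpa using this
      · apply h2
        ext i
        fin_cases i
        · simpa using ha0
        · simpa using hb0
        · have : x 2 = -1 := by linarith
          simpa using this
    have habpos : 0 < x 0 ^ 2 + x 1 ^ 2 :=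
      lt_of_le_of_ne (by positivity) (Ne.symm hab)
    set r := Real.sqrt (x 0 ^ 2 + x 1 ^ 2) with hr
    have hrpos : 0 < r := Real.sqrt_pos.mpr habpos
    have hr0 : r ≠ 0 := ne_of_gt hrpos
    have hr2 : r ^ 2 = x 0 ^ 2 + x 1 ^ 2 := Real.sq_sqrt (le_of_lt habpos)
    have hr2' : r ^ 2 = 1 - x 2 ^ 2 := by linarith
    set u := Real.arsinh (-(x 2) / r) with hu
    have hcosh : Real.cosh u = 1 / r := by
      rw [hu, Real.cosh_arsinh]
      have : 1 + (-(x 2) / r) ^ 2 = (1 / r) ^ 2 := by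
        field_simp
        nlinarith
      rw [this, Real.sqrt_sq (by positivity)]
    have htanh : Real.tanh u = -(x 2) := by
      rw [Real.tanh_eq_sinh_div_cosh, hu, Real.sinh_arsinh, ← hu, hcosh]
      field_simp
    set z : ℂ := ⟨x 0 / r, x 1 / r⟩ with hz
    have habs : ‖z‖ = 1 := by
      have hsq : ‖z‖ ^ 2 = 1 := by
        rw [Complex.sq_norm, Complex.normSq_mk]
        field_simp
        nlinarith
      nlinarith [norm_nonneg z]
    have hz0 : z ≠ 0 := by
      intro h
      rw [h] at habs
      simp at habs
    set t := z.arg with ht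
    have hcos : Real.cos t = x 0 / r := by
      rw [ht, Complex.cos_arg hz0, habs]
      simp [hz]
    have hsin : Real.sin t = x 1 / r := by
      rw [ht, Complex.sin_arg, habs]
      simp [hz]
    refine ⟨(t, u), ?_⟩
    ext i
    fin_cases i
    · show Real.cos t / Real.cosh u = x 0
      rw [hcos, hcosh]
      field_simp
    · show Real.sin t / Real.cosh u = x 1
      rw [hsin, hcosh]
      field_simp
    · show -Real.tanh u = x 2
      rw [htanh]; ring
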